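/- For every alphabet Σ with a distinguished symbol ! ∉ Σ, there exists a reversible basic 0-pebble transducer with 5 states computing the iterated reverse function over Σ ∪ {!}. -/

import Mathlib

/-!
Common framework: pebble transducers with equality tests
(following "Reversible Pebble Transducers").
-/

namespace RevPeb

/-- Atomic tests: `headPeb i` is `(h = p_i)`, `pebPeb i j` is `(p_i = p_j)`
(indices are 0-based, pebble `i+1` of the paper). -/
inductive Atom (k : ℕ) : Type where
  | headPeb : Fin k → Atom k
  | pebPeb : Fin k → Fin k → Atom k

/-- Pebble operations (0-based: `drop i`/`lift i` refer to pebble `i+1` of the paper). -/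
inductive PebOp (k : ℕ) : Type where
  | nop : PebOp k
  | drop : Fin k → PebOp k
  | lift : Fin k → PebOp k

/-- A test is a conjunction of literals: an atom together with a polarity. -/
abbrev Test (k : ℕ) : Type := List (Atom k × Bool)

/-- A transition `(q, a, φ, op, q')`; `letter = none` encodes the endmarker `#`. -/
structure PTrans (Q Sg : Type*) (k : ℕ) where
  src : Q
  letter : Option Sg
  test : Test k
  op : PebOp k
  tgt : Q

/-- A `k`-pebble transducer with equality tests (data part).
`dir q` is the polarity of state `q` (which part of `Q_{+1} ⊎ Q_0 ⊎ Q_{-1}` it lies in). -/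
structure PT (Q Sg Gm : Type*) (k : ℕ) where
  dir : Q → SignType
  qinit : Q
  qfin : Q
  δ : Set (PTrans Q Sg k)
  μ : PTrans Q Sg k → List Gm

variable {Q Sg Gm : Type*} {k : ℕ}

/-- Well-formedness: `q_i, q_f ∈ Q_0`, `q_i ≠ q_f`, no transition leaves `q_f`
nor enters `q_i`, and the transition set is finite. -/
def PT.WF (T : PT Q Sg Gm k) : Prop :=
  T.dir T.qinit = 0 ∧ T.dir T.qfin = 0 ∧ T.qinit ≠ T.qfin ∧
  (∀ t ∈ T.δ, t.src ≠ T.qfin ∧ t.tgt ≠ T.qinit) ∧ T.δ.Finite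

/-- Letter of the circular word `#u` at position `h ∈ {0,…,|u|}`;
`none` is the endmarker `#` (at position 0). -/
def letterAt (u : List Sg) (h : ℕ) : Option Sg :=
  if h = 0 then none else u[h-1]?

/-- Satisfaction of an atomic test by a pebble stack and head position. -/
def atomSat (peb : List ℕ) (h : ℕ) : Atom k → Prop
  | .headPeb i => (i : ℕ) < peb.length ∧ peb.getD i 0 = h
  | .pebPeb i j => (i : ℕ) < peb.length ∧ (j : ℕ) < peb.length ∧ peb.getD i 0 = peb.getD j 0

/-- Satisfaction of a test (conjunction of literals). -/
def testSat (peb : List ℕ) (h : ℕ) (φ : Test k) : Prop :=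
  ∀ l ∈ φ, (atomSat peb h l.1 ↔ l.2 = true)

/-- Executability of a pebble operation: `drop i` (pebble `i+1` of the paper) needs
`|peb| = i`, `lift i` needs `|peb| = i+1` and the top pebble at the head. -/
def opEnabled (peb : List ℕ) (h : ℕ) : PebOp k → Prop
  | .nop => True
  | .drop n => peb.length = (n : ℕ)
  | .lift n => peb.length = (n : ℕ) + 1 ∧ peb.getD (n : ℕ) 0 = h

/-- Effect of a pebble operation on the pebble stack. -/
def opApply (peb : List ℕ) (h : ℕ) : PebOp k → List ℕ
  | .nop => peb
  | .drop _ => peb ++ [h]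
  | .lift _ => peb.dropLast

/-- Head movement on the circular word `#u` (`len = |u|`, positions mod `len+1`). -/
def nextHead (len h : ℕ) : SignType → ℕ
  | .pos => (h + 1) % (len + 1)
  | .zero => h
  | .neg => (h + len) % (len + 1)

/-- A configuration `(q, peb, h)`. -/
structure Config (Q : Type*) where
  q : Q
  peb : List ℕ
  h : ℕ

/-- One step of the transducer on input `u` using transition `t`. -/
def PT.StepT (T : PT Q Sg Gm k) (u : List Sg) (t : PTrans Q Sg k) (C C' : Config Q) : Prop :=
  t ∈ T.δ ∧ C.q = t.src ∧ C.h ≤ u.length ∧ C.peb.length ≤ k ∧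
  letterAt u C.h = t.letter ∧
  testSat C.peb C.h t.test ∧ opEnabled C.peb C.h t.op ∧
  C'.q = t.tgt ∧ C'.peb = opApply C.peb C.h t.op ∧
  C'.h = nextHead u.length C.h (T.dir t.tgt)

/-- Runs, accumulating the produced output word. -/
inductive PT.Run (T : PT Q Sg Gm k) (u : List Sg) :
    Config Q → Config Q → List Gm → Prop where
  | refl (C : Config Q) : PT.Run T u C C []
  | step {C C' C'' : Config Q} (t : PTrans Q Sg k) {v : List Gm} :
      T.StepT u t C C' → PT.Run T u C' C'' v → PT.Run T u C C'' (T.μ t ++ v)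

/-- Semantics: pairs `(u,v)` such that some accepting run on `#u` outputs `v`. -/
def PT.Sem (T : PT Q Sg Gm k) : Set (List Sg × List Gm) :=
  {p | T.Run p.1 ⟨T.qinit, [], 0⟩ ⟨T.qfin, [], 0⟩ p.2}

/-- `t` is enabled at configuration `C` (on input `u`). -/
def PT.Enabled (T : PT Q Sg Gm k) (u : List Sg) (t : PTrans Q Sg k) (C : Config Q) : Prop :=
  ∃ C', T.StepT u t C C'

/-- `t` is reverse-enabled at configuration `C'` (on input `u`). -/
def PT.RevEnabled (T : PT Q Sg Gm k) (u : List Sg) (t : PTrans Q Sg k) (C' : Config Q) : Prop :=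
  ∃ C, T.StepT u t C C'

/-- Determinism: two transitions simultaneously enabled at a common configuration coincide. -/
def PT.Deterministic (T : PT Q Sg Gm k) : Prop :=
  ∀ (u : List Sg) (t₁ t₂ : PTrans Q Sg k) (C : Config Q),
    T.Enabled u t₁ C → T.Enabled u t₂ C → t₁ = t₂

/-- Reverse-determinism. -/
def PT.RevDeterministic (T : PT Q Sg Gm k) : Prop :=
  ∀ (u : List Sg) (t₁ t₂ : PTrans Q Sg k) (C' : Config Q),
    T.RevEnabled u t₁ C' → T.RevEnabled u t₂ C' → t₁ = t₂

/-- Reversible = deterministic and reverse-deterministic. -/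
def PT.Reversible (T : PT Q Sg Gm k) : Prop := T.Deterministic ∧ T.RevDeterministic

/-- A basic pebble transducer uses no pebble-pebble equality atoms. -/
def PT.Basic (T : PT Q Sg Gm k) : Prop :=
  ∀ t ∈ T.δ, ∀ l ∈ t.test, ∀ i j : Fin k, l.1 ≠ Atom.pebPeb i j

/-- `T` computes the partial function `f` (encoded with `Option`): `⟦T⟧` is the graph of `f`. -/
def PT.Computes (T : PT Q Sg Gm k) (f : List Sg → Option (List Gm)) : Prop :=
  ∀ u v, (u, v) ∈ T.Sem ↔ f u = some v

end RevPeb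

namespace RevPeb

/-- Helper for the iterated reverse function: `cur` holds the current block, reversed. -/
def iterRevGo {α : Type*} (cur : List α) : List (Option α) → List (Option α)
  | [] => cur.map some
  | none :: rest => cur.map some ++ none :: iterRevGo [] rest
  | some a :: rest => iterRevGo (a :: cur) rest

/-- The iterated reverse function over `Σ ∪ {!}` (`none` is the separator `!`):
`u₀!u₁!⋯!uₙ ↦ u₀ᴿ!u₁ᴿ!⋯!uₙᴿ`. -/
def iterRevFun {α : Type*} (l : List (Option α)) : List (Option α) :=
  iterRevGo [] l

/-! ### Construction: a 5-state reversible basic 0-pebble transducer for iterated reverse -/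

namespace IterRev

/-- The five states. -/
inductive St : Type where
  | qi | qR | qL | qS | qf
  deriving DecidableEq

instance : Fintype St :=
  Fintype.ofList [.qi, .qR, .qL, .qS, .qf] (fun x => by cases x <;> simp)

/-- Transition function: given state and letter (`none` = endmarker `#`,
`some none` = separator `!`, `some (some a)` = letter), the target state and output. -/
def trans {Sg : Type} : St → Option (Option Sg) → Option (St × List (Option Sg))
  | .qi, none => some (.qR, [])
  | .qR, some (some _) => some (.qR, [])
  | .qR, some none => some (.qL, [])
  | .qR, none => some (.qL, [])
  | .qL, some (some a) => some (.qL, [some a])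
  | .qL, some none => some (.qS, [])
  | .qL, none => some (.qS, [])
  | .qS, some (some _) => some (.qS, [])
  | .qS, some none => some (.qR, [none])
  | .qS, none => some (.qf, [])
  | _, _ => none

def sdir : St → SignType
  | .qi => .zero | .qR => .pos | .qL => .neg | .qS => .pos | .qf => .zero

variable {Sg : Type}

def Mδ (Sg : Type) : Set (PTrans St (Option Sg) 0) :=
  {t | t.test = [] ∧ t.op = .nop ∧ ∃ o, trans t.src t.letter = some (t.tgt, o)}

def Mμ (t : PTrans St (Option Sg) 0) : List (Option Sg) :=
  ((trans t.src t.letter).map Prod.snd).getD []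

/-- The transducer. -/
def M (Sg : Type) : PT St (Option Sg) (Option Sg) 0 :=
  ⟨sdir, .qi, .qf, Mδ Sg, Mμ⟩

/-! #### Generic helpers -/

lemma run_append {Q Sg' Gm : Type} {k : ℕ} {T : PT Q Sg' Gm k} {u : List Sg'}
    {C C' C'' : Config Q} {v w : List Gm} :
    T.Run u C C' v → T.Run u C' C'' w → T.Run u C C'' (v ++ w) := by
  intro h1
  induction h1 with
  | refl C => intro h2; simpa using h2
  | step t hs _ ih =>
      intro h2; rw [List.append_assoc]; exact PT.Run.step t hs (ih h2)

lemma mod_small {x n : ℕ} (h : x ≤ n) : x % (n + 1) = x := Nat.mod_eq_of_lt (by omega)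

lemma mod_pred {h n : ℕ} (H : h ≤ n) :
    (h + n) % (n + 1) = if h = 0 then n else h - 1 := by
  split
  · subst ‹h = 0›; simpa using Nat.mod_eq_of_lt (by omega)
  · have : h + n = (h - 1) + (n + 1) := by omega
    rw [this, Nat.add_mod_right, Nat.mod_eq_of_lt (by omega)]

lemma letterAt_succ (u : List Sg) (h : ℕ) : letterAt u (h + 1) = u[h]? := by
  simp [letterAt]

lemma letterAt_zero (u : List Sg) : letterAt u 0 = none := rfl

lemma get_at {α : Type*} (x w : List α) : (x ++ w)[x.length]? = w[0]? := by
  rw [List.getElem?_append_right le_rfl]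
  simp

/-! #### Single steps -/

lemma run_single (u : List (Option Sg)) {q : St} {a : Option (Option Sg)} {q' : St}
    {o : List (Option Sg)} (hq : trans q a = some (q', o)) {h : ℕ}
    (hh : h ≤ u.length) (hl : letterAt u h = a) :
    (M Sg).Run u ⟨q, [], h⟩ ⟨q', [], nextHead u.length h (sdir q')⟩ o := by
  have hs : (M Sg).StepT u ⟨q, a, [], .nop, q'⟩ ⟨q, [], h⟩
      ⟨q', [], nextHead u.length h (sdir q')⟩ := by
    refine ⟨⟨rfl, rfl, o, hq⟩, rfl, hh, by simp, hl, ?_, trivial, rfl, rfl, rfl⟩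
    intro l hl'; simp at hl'
  have := PT.Run.step (T := M Sg) ⟨q, a, [], .nop, q'⟩ hs (PT.Run.refl _)
  have hμ : (M Sg).μ ⟨q, a, [], .nop, q'⟩ = o := by
    simp [M, Mμ, hq]
  rw [hμ, List.append_nil] at this
  exact this

/-! #### Scans -/

lemma runScan (u : List (Option Sg)) (q : St) (hd : sdir q = .pos)
    (hq : ∀ a : Sg, trans (Sg := Sg) q (some (some a)) = some (q, ([] : List (Option Sg)))) :
    ∀ (b : List Sg) (v r : List (Option Sg)), u = v ++ b.map some ++ r →
      (M Sg).Run u ⟨q, [], (v.length + 1) % (u.length + 1)⟩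
        ⟨q, [], (v.length + b.length + 1) % (u.length + 1)⟩ [] := by
  intro b
  induction b with
  | nil => intro v r hu; simpa using PT.Run.refl (T := M Sg) (u := u) _
  | cons a b ih =>
      intro v r hu
      have hu2 : u = v ++ (some a :: (b.map some ++ r)) := by simp [hu]
      have hn : u.length = v.length + (b.length + 1) + r.length := by
        rw [hu2]; simp; omega
      have hle : v.length + 1 ≤ u.length := by omega
      have hlet : letterAt u (v.length + 1) = some (some a) := by
        rw [letterAt_succ, hu2, get_at]; simp
      have hstep := run_single u (hq a) hle hlet
      rw [hd] at hstep
      have hnh : nextHead u.length (v.length + 1) SignType.pos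
          = (v.length + 1 + 1) % (u.length + 1) := rfl
      rw [hnh] at hstep
      have hrun := ih (v ++ [some a]) r (by simp [hu])
      rw [List.length_append, List.length_singleton] at hrun
      rw [mod_small hle]
      have hfin := run_append hstep hrun
      simp only [List.length_cons]
      have he : v.length + (b.length + 1) + 1 = v.length + 1 + b.length + 1 := by omega
      rw [he]
      simpa using hfin

lemma runL (u : List (Option Sg)) (v : List (Option Sg)) :
    ∀ (b : List Sg) (r : List (Option Sg)), u = v ++ b.map some ++ r →
      (M Sg).Run u ⟨.qL, [], v.length + b.length⟩ ⟨.qL, [], v.length⟩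
        (b.reverse.map some) := by
  intro b
  induction b using List.reverseRecOn with
  | nil => intro r hu; simpa using PT.Run.refl (T := M Sg) (u := u) _
  | append_singleton b a ih =>
      intro r hu
      have hu' : u = v ++ b.map some ++ (some a :: r) := by simp [hu]
      have hu2 : u = (v ++ b.map some) ++ (some a :: r) := by simp [hu']
      have hn : u.length = v.length + b.length + 1 + r.length := by
        rw [hu2]; simp; omega
      have hle : v.length + b.length + 1 ≤ u.length := by omega
      have hlet : letterAt u (v.length + b.length + 1) = some (some a) := by
        have h0 : (v ++ b.map some).length = v.length + b.length := by simp
        rw [letterAt_succ, hu2, ← h0, get_at]; simp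
      have hstep := run_single u (q := .qL) (q' := .qL) (a := some (some a))
        (o := [some a]) rfl hle hlet
      have hnh : nextHead u.length (v.length + b.length + 1) (sdir .qL)
          = v.length + b.length := by
        show (v.length + b.length + 1 + u.length) % (u.length + 1) = _
        rw [mod_pred (by omega)]
        simp
      rw [hnh] at hstep
      have hrun := ih (some a :: r) hu'
      have hfin := run_append hstep hrun
      have hlen : (b ++ [a]).length = b.length + 1 := by simp
      rw [hlen, ← Nat.add_assoc]
      simpa using hfin

/-! #### Shape of tails and separators -/

def goodTail (r : List (Option Sg)) : Prop := r = [] ∨ ∃ r', r = none :: r'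

def goodSep (v : List (Option Sg)) : Prop := v = [] ∨ ∃ w, v = w ++ [none]

def tailOut : List (Option Sg) → List (Option Sg)
  | [] => []
  | none :: r' => none :: iterRevFun r'
  | some _ :: _ => []

lemma decomp (r : List (Option Sg)) :
    ∃ (b : List Sg) (r' : List (Option Sg)),
      r = b.map some ++ r' ∧ goodTail r' := by
  induction r with
  | nil => exact ⟨[], [], rfl, Or.inl rfl⟩
  | cons a t ih =>
      cases a with
      | none => exact ⟨[], none :: t, rfl, Or.inr ⟨t, rfl⟩⟩
      | some x =>
          obtain ⟨b, r', h1, h2⟩ := ih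
          exact ⟨x :: b, r', by simp [h1], h2⟩

lemma iterRevGo_append (b : List Sg) :
    ∀ (cur : List Sg) (rest : List (Option Sg)),
      iterRevGo cur (b.map some ++ rest) = iterRevGo (b.reverse ++ cur) rest := by
  induction b with
  | nil => intro cur rest; simp
  | cons a b ih =>
      intro cur rest
      show iterRevGo (a :: cur) (b.map some ++ rest) = _
      rw [ih]
      congr 1
      simp

lemma iterRev_eq (b : List Sg) (r : List (Option Sg)) (hr : goodTail r) :
    iterRevFun (b.map some ++ r) = b.reverse.map some ++ tailOut r := by
  rcases hr with rfl | ⟨r', rfl⟩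
  · unfold iterRevFun
    rw [iterRevGo_append]
    simp [iterRevGo, tailOut]
  · unfold iterRevFun
    rw [iterRevGo_append]
    show (b.reverse ++ []).map some ++ none :: iterRevGo [] r' = _
    simp [tailOut, iterRevFun]

lemma letterAt_sep (u v : List (Option Sg)) (rest : List (Option Sg))
    (hu : u = v ++ rest) (hv : goodSep v) :
    letterAt u v.length = none ∨ letterAt u v.length = some none := by
  rcases hv with rfl | ⟨w, rfl⟩
  · left; rfl
  · right
    have h0 : (w ++ [none]).length = w.length + 1 := by simp
    have hu2 : u = w ++ (none :: rest) := by simp [hu]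
    rw [h0, letterAt_succ, hu2, get_at]
    simp

/-! #### The main run -/

lemma sep_trans (u : List (Option Sg)) (v rest : List (Option Sg))
    (hu : u = v ++ rest) (hv : goodSep v) :
    ∃ a0, letterAt u v.length = a0 ∧
      trans (Sg := Sg) .qL a0 = some (.qS, ([] : List (Option Sg))) := by
  obtain h | h := letterAt_sep u v rest hu hv
  · exact ⟨none, h, rfl⟩
  · exact ⟨some none, h, rfl⟩

lemma main_run_nil (u : List (Option Sg)) (b : List Sg) (v : List (Option Sg))
    (hu : u = v ++ b.map some ++ []) (hv : goodSep v) :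
    (M Sg).Run u ⟨.qR, [], (v.length + 1) % (u.length + 1)⟩ ⟨.qf, [], 0⟩
      (b.reverse.map some ++ tailOut []) := by
  rw [List.append_nil] at hu
  have hn : u.length = v.length + b.length := by simp [hu]
  set l := v.length with hldef
  set m := b.length with hmdef
  -- phase R
  have hR := runScan u .qR rfl (fun a => rfl) b v [] (by simp [hu])
  have hmod0 : (l + m + 1) % (u.length + 1) = 0 := by
    rw [← hn] at *; exact Nat.mod_self _
  rw [hmod0] at hR
  -- switch to L at the endmarker
  have hstep1 := run_single u (q := .qR) (q' := .qL) (a := none)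
    (o := []) rfl (h := 0) (by omega) (letterAt_zero u)
  have hnh1 : nextHead u.length 0 (sdir .qL) = l + m := by
    show (0 + u.length) % (u.length + 1) = _
    rw [mod_pred (by omega)]
    simp [hn]
  rw [hnh1] at hstep1
  -- phase L
  have hL := runL u v b [] (by simp [hu])
  -- switch to S at the left boundary
  obtain ⟨a0, ha0, htr⟩ := sep_trans u v (b.map some)
    (by simpa [List.append_assoc] using hu) hv
  have hstep2 := run_single u htr (h := l) (by omega) ha0
  have hnh2 : nextHead u.length l (sdir .qS) = (l + 1) % (u.length + 1) := rfl
  rw [hnh2] at hstep2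
  -- phase S
  have hS := runScan u .qS rfl (fun a => rfl) b v [] (by simp [hu])
  rw [hmod0] at hS
  -- terminate at the endmarker
  have hstep3 := run_single u (q := .qS) (q' := .qf) (a := none)
    (o := []) rfl (h := 0) (by omega) (letterAt_zero u)
  have hnh3 : nextHead u.length 0 (sdir .qf) = 0 := rfl
  rw [hnh3] at hstep3
  have htotal := run_append hR (run_append hstep1 (run_append hL
    (run_append hstep2 (run_append hS hstep3))))
  simpa [tailOut] using htotal

lemma main_run (u : List (Option Sg)) :
    ∀ (N : ℕ) (r : List (Option Sg)), r.length ≤ N →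
    ∀ (b : List Sg) (v : List (Option Sg)), u = v ++ b.map some ++ r →
      goodTail r → goodSep v →
      (M Sg).Run u ⟨.qR, [], (v.length + 1) % (u.length + 1)⟩ ⟨.qf, [], 0⟩
        (b.reverse.map some ++ tailOut r) := by
  intro N
  induction N with
  | zero =>
      intro r hr b v hu ht hv
      have hrnil : r = [] := by
        rcases ht with rfl | ⟨r', rfl⟩
        · rfl
        · simp at hr
      subst hrnil
      exact main_run_nil u b v hu hv
  | succ N ih =>
      intro r hr b v hu ht hv
      rcases ht with rfl | ⟨r', rfl⟩
      · exact main_run_nil u b v hu hv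
      · have hn : u.length = v.length + b.length + 1 + r'.length := by
          simp [hu]; omega
        set l := v.length with hldef
        set m := b.length with hmdef
        -- phase R
        have hR := runScan u .qR rfl (fun a => rfl) b v (none :: r') hu
        -- switch to L at the separator
        have hsep1 : letterAt u (l + m + 1) = some none := by
          have hu2 : u = (v ++ b.map some) ++ (none :: r') := by simp [hu]
          have h0 : (v ++ b.map some).length = l + m := by simp [← hldef, ← hmdef]
          rw [letterAt_succ, hu2, ← h0, get_at]
          simp
        have hstep1 := run_single u (q := .qR) (q' := .qL) (a := some none)
          (o := []) rfl (h := l + m + 1) (by omega) hsep1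
        have hnh1 : nextHead u.length (l + m + 1) (sdir .qL) = l + m := by
          show (l + m + 1 + u.length) % (u.length + 1) = _
          rw [mod_pred (by omega)]
          simp
        rw [hnh1] at hstep1
        -- phase L
        have hL := runL u v b (none :: r') hu
        -- switch to S at the left boundary
        obtain ⟨a0, ha0, htr⟩ := sep_trans u v (b.map some ++ none :: r')
          (by simpa [List.append_assoc] using hu) hv
        have hstep2 := run_single u htr (h := l) (by omega) ha0
        -- phase S
        have hS := runScan u .qS rfl (fun a => rfl) b v (none :: r') hu
        -- at the separator, output `!` and go back to R
        have hstep3 := run_single u (q := .qS) (q' := .qR) (a := some none)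
          (o := [none]) rfl (h := l + m + 1) (by omega) hsep1
        -- recursive call on r'
        obtain ⟨b', r'', hr1, hr2⟩ := decomp r'
        have hu' : u = (v ++ b.map some ++ [none]) ++ b'.map some ++ r'' := by
          rw [hu, hr1]; simp
        have hlen' : (v ++ b.map some ++ [none]).length = l + m + 1 := by
          simp [← hldef, ← hmdef]
          omega
        have hrec := ih r'' (by
            have h5 : r'.length = b'.length + r''.length := by simp [hr1]
            simp only [List.length_cons] at hr
            omega) b' (v ++ b.map some ++ [none]) hu' hr2 (Or.inr ⟨_, rfl⟩)
        rw [hlen'] at hrec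
        -- assemble
        have hmod1 : (l + m + 1) % (u.length + 1) = l + m + 1 := mod_small (by omega)
        rw [hmod1] at hR hS
        have hnh2 : nextHead u.length l (sdir .qS) = (l + 1) % (u.length + 1) := rfl
        rw [hnh2] at hstep2
        have hnh3 : nextHead u.length (l + m + 1) (sdir .qR)
            = (l + m + 1 + 1) % (u.length + 1) := rfl
        rw [hnh3] at hstep3
        have hout : iterRevFun r' = b'.reverse.map some ++ tailOut r'' := by
          rw [hr1]; exact iterRev_eq b' r'' hr2
        have htotal := run_append hR (run_append hstep1 (run_append hL
          (run_append hstep2 (run_append hS (run_append hstep3 hrec)))))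
        simpa [tailOut, hout] using htotal

/-! #### Forward inclusion -/

lemma accept_run (u : List (Option Sg)) :
    (M Sg).Run u ⟨.qi, [], 0⟩ ⟨.qf, [], 0⟩ (iterRevFun u) := by
  obtain ⟨b, r, hu, ht⟩ := decomp u
  have hstep0 := run_single u (q := .qi) (q' := .qR) (a := none)
    (o := []) rfl (h := 0) (by omega) (letterAt_zero u)
  have hnh0 : nextHead u.length 0 (sdir .qR) = (0 + 1) % (u.length + 1) := rfl
  rw [hnh0] at hstep0
  have hmain := main_run u u.length r (by simp [hu]) b [] (by simpa using hu)
    ht (Or.inl rfl)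
  have := run_append hstep0 (by simpa using hmain)
  have hout : iterRevFun u = b.reverse.map some ++ tailOut r := by
    rw [hu]; exact iterRev_eq b r ht
  simpa [hout] using this

/-! #### Determinism and reverse determinism -/

lemma nextHead_inj {n h1 h2 : ℕ} (d : SignType) (H1 : h1 ≤ n) (H2 : h2 ≤ n)
    (h : nextHead n h1 d = nextHead n h2 d) : h1 = h2 := by
  cases d with
  | zero => exact h
  | pos =>
      simp only [nextHead] at h
      rcases Nat.lt_or_ge h1 n with h1' | h1' <;> rcases Nat.lt_or_ge h2 n with h2' | h2'
      · rw [mod_small (by omega), mod_small (by omega)] at h; omega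
      · have : h2 = n := by omega
        subst this
        rw [mod_small (by omega), Nat.mod_self] at h; omega
      · have : h1 = n := by omega
        subst this
        rw [Nat.mod_self, mod_small (by omega)] at h; omega
      · omega
  | neg =>
      simp only [nextHead] at h
      rw [mod_pred H1, mod_pred H2] at h
      split_ifs at h <;> omega

lemma trans_back {q1 q2 : St} {a : Option (Option Sg)} {q' : St}
    {o1 o2 : List (Option Sg)} (h1 : trans q1 a = some (q', o1))
    (h2 : trans q2 a = some (q', o2)) : q1 = q2 := by
  rcases a with _ | (_ | x) <;> cases q1 <;> cases q2 <;> simp [trans] at h1 h2 ⊢ <;>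
    (try rfl) <;> (obtain ⟨rfl, -⟩ := h1; simp_all)

lemma trans_src_ne_qf {q : St} {a : Option (Option Sg)} {p : St × List (Option Sg)}
    (h : trans q a = some p) : q ≠ .qf := by
  rintro rfl
  rcases a with _ | (_ | x) <;> simp [trans] at h

lemma trans_tgt_ne_qi {q : St} {a : Option (Option Sg)} {q' : St} {o : List (Option Sg)}
    (h : trans q a = some (q', o)) : q' ≠ .qi := by
  rintro rfl
  rcases a with _ | (_ | x) <;> cases q <;> simp [trans] at h

lemma step_det {u : List (Option Sg)} {t1 t2 : PTrans St (Option Sg) 0}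
    {C C1 C2 : Config St} (h1 : (M Sg).StepT u t1 C C1) (h2 : (M Sg).StepT u t2 C C2) :
    t1 = t2 ∧ C1 = C2 := by
  obtain ⟨⟨e1, e2, o1, e3⟩, hsrc1, -, -, hlet1, -, -, hq1, hp1, hh1⟩ := h1
  obtain ⟨⟨f1, f2, o2, f3⟩, hsrc2, -, -, hlet2, -, -, hq2, hp2, hh2⟩ := h2
  have hsrc : t1.src = t2.src := hsrc1 ▸ hsrc2
  have hlet : t1.letter = t2.letter := hlet1 ▸ hlet2
  rw [← hsrc, ← hlet, e3] at f3
  have hpair := Option.some.inj f3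
  have htgt : t1.tgt = t2.tgt := congrArg Prod.fst hpair
  have ht : t1 = t2 := by cases t1; cases t2; simp_all
  subst ht
  refine ⟨rfl, ?_⟩
  cases C1; cases C2
  simp_all

lemma step_revdet {u : List (Option Sg)} {t1 t2 : PTrans St (Option Sg) 0}
    {C1 C2 C' : Config St} (h1 : (M Sg).StepT u t1 C1 C') (h2 : (M Sg).StepT u t2 C2 C') :
    t1 = t2 := by
  obtain ⟨⟨e1, e2, o1, e3⟩, hsrc1, hb1, -, hlet1, -, -, hq1, hp1, hh1⟩ := h1
  obtain ⟨⟨f1, f2, o2, f3⟩, hsrc2, hb2, -, hlet2, -, -, hq2, hp2, hh2⟩ := h2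
  have htgt : t1.tgt = t2.tgt := hq1 ▸ hq2
  rw [← hq1] at hh1
  rw [← hq2] at hh2
  have hh : C1.h = C2.h :=
    nextHead_inj ((M Sg).dir C'.q) hb1 hb2 (by rw [← hh1, ← hh2])
  have hlet : t1.letter = t2.letter := by rw [← hlet1, ← hlet2, hh]
  rw [← htgt, ← hlet] at f3
  have hsrc : t1.src = t2.src := trans_back e3 f3
  cases t1; cases t2
  simp_all

lemma M_det : (M Sg).Deterministic := by
  intro u t1 t2 C h1 h2
  obtain ⟨C1, h1⟩ := h1
  obtain ⟨C2, h2⟩ := h2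
  exact (step_det h1 h2).1

lemma M_revdet : (M Sg).RevDeterministic := by
  intro u t1 t2 C' h1 h2
  obtain ⟨C1, h1⟩ := h1
  obtain ⟨C2, h2⟩ := h2
  exact step_revdet h1 h2

/-! #### Uniqueness of accepting runs -/

lemma no_step_from_qf {u : List (Option Sg)} {t : PTrans St (Option Sg) 0}
    {C C' : Config St} (h : (M Sg).StepT u t C C') (hq : C.q = .qf) : False := by
  obtain ⟨⟨e1, e2, o, e3⟩, hsrc, -⟩ := h
  exact trans_src_ne_qf e3 (by rw [← hsrc, hq])

lemma run_unique' {u : List (Option Sg)} {C Cf : Config St} {v1 : List (Option Sg)}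
    (h1 : (M Sg).Run u C Cf v1) :
    Cf.q = .qf → ∀ v2, (M Sg).Run u C Cf v2 → v1 = v2 := by
  induction h1 with
  | refl C =>
      intro hf v2 h2
      cases h2 with
      | refl => rfl
      | step t hs _ => exact (no_step_from_qf hs hf).elim
  | step t hs hrun ih =>
      intro hf v2 h2
      cases h2 with
      | refl => exact (no_step_from_qf hs hf).elim
      | step t' hs' hrun' =>
          obtain ⟨rfl, rfl⟩ := step_det hs hs'
          rw [ih hf _ hrun']

lemma run_unique {u : List (Option Sg)} {C : Config St} {v1 v2 : List (Option Sg)}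
    (h1 : (M Sg).Run u C ⟨.qf, [], 0⟩ v1) (h2 : (M Sg).Run u C ⟨.qf, [], 0⟩ v2) :
    v1 = v2 := run_unique' h1 rfl v2 h2

/-! #### Well-formedness and assembly -/

lemma M_WF [Fintype Sg] : (M Sg).WF := by
  refine ⟨rfl, rfl, show St.qi ≠ St.qf by decide, ?_, ?_⟩
  · rintro t ⟨h1, h2, o, h3⟩
    exact ⟨trans_src_ne_qf h3, trans_tgt_ne_qi h3⟩
  · apply Set.Finite.subset (Set.finite_range
      (fun p : St × Option (Option Sg) =>
        (⟨p.1, p.2, [], .nop, ((trans p.1 p.2).map Prod.fst).getD .qi⟩ :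
          PTrans St (Option Sg) 0)))
    rintro t ⟨h1, h2, o, h3⟩
    refine ⟨(t.src, t.letter), ?_⟩
    cases t
    simp_all

lemma M_Sem : (M Sg).Sem =
    {p : List (Option Sg) × List (Option Sg) | p.2 = iterRevFun p.1} := by
  ext ⟨u, v⟩
  constructor
  · intro h
    exact run_unique h (accept_run u)
  · intro h
    have := accept_run (Sg := Sg) u
    rw [← h] at this
    exact this

end IterRev

/-- For every alphabet `Σ` (with an extra separator symbol `!`, encoded as
`none`), there is a reversible basic `0`-pebble transducer with 5 states computing the
iterated reverse function over `Σ ∪ {!}`. -/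
theorem iterated_reverse_reversible (Sg : Type) [Fintype Sg] :
    ∃ (Q : Type) (instQ : Fintype Q) (T : PT Q (Option Sg) (Option Sg) 0),
      T.WF ∧ T.Basic ∧ T.Reversible ∧
      @Fintype.card Q instQ = 5 ∧
      T.Sem = {p : List (Option Sg) × List (Option Sg) | p.2 = iterRevFun p.1} := by
  refine ⟨IterRev.St, inferInstance, IterRev.M Sg, IterRev.M_WF, ?_, ?_, by decide, IterRev.M_Sem⟩
  · rintro t ⟨h1, h2, o, h3⟩ l hl
    rw [h1] at hl
    exact absurd hl List.not_mem_nil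
  · exact ⟨IterRev.M_det, IterRev.M_revdet⟩

end RevPeb
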